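/- If R is an integral domain which is not a field and S = R \ {0}, then every R-module is S-flat, and hence there exists an S-flat R-module which is not flat. -/

import Mathlib

/-- A module `M` is `S`-flat if for every finitely generated ideal `I`,
the kernel of `I ⊗[R] M → R ⊗[R] M` is `S`-torsion. -/
def IsSFlat (R : Type*) [CommRing R] (S : Submonoid R) (M : Type*) [AddCommGroup M]
    [Module R M] : Prop :=
  ∀ I : Ideal R, I.FG →
    ∀ x ∈ LinearMap.ker (LinearMap.rTensor M (I.subtype)), ∃ s ∈ S, s • x = 0


lemma isSFlat_aux {R : Type} [CommRing R] [IsDomain R] (S : Submonoid R)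
    (hS : ∀ x : R, x ∈ S ↔ x ≠ 0) (M : Type*) [AddCommGroup M] [Module R M] :
    IsSFlat R S M := by
  intro I hIfg x hx
  rw [LinearMap.mem_ker] at hx
  by_cases hI0 : I = ⊥
  · refine ⟨1, (hS 1).2 one_ne_zero, ?_⟩
    subst hI0
    rw [Subsingleton.elim x 0, smul_zero]
  · obtain ⟨a, haI, ha0⟩ : ∃ a ∈ I, a ≠ 0 := by
      by_contra h
      push_neg at h
      exact hI0 ((Submodule.eq_bot_iff I).2 h)
    refine ⟨a, (hS a).2 ha0, ?_⟩
    have hg : (LinearMap.toSpanSingleton R I ⟨a, haI⟩).comp I.subtype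
        = a • LinearMap.id := by
      ext y
      show (y : R) • a = a • (y : R)
      rw [smul_eq_mul, smul_eq_mul, mul_comm]
    have : a • x = LinearMap.rTensor M
        ((LinearMap.toSpanSingleton R I ⟨a, haI⟩).comp I.subtype) x := by
      rw [hg, LinearMap.rTensor_smul, LinearMap.rTensor_id]
      rfl
    rw [this, LinearMap.rTensor_comp, LinearMap.comp_apply, hx, map_zero]

theorem domain_all_modules_s_flat {R : Type} [CommRing R] [IsDomain R]
    (hnf : ¬IsField R) (S : Submonoid R) (hS : ∀ x : R, x ∈ S ↔ x ≠ 0) :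
    (∀ (M : Type) [AddCommGroup M] [Module R M], IsSFlat R S M) ∧
    ∃ M : ModuleCat R, IsSFlat R S M ∧ ¬Module.Flat R M := by
  have key : ∀ (M : Type) [AddCommGroup M] [Module R M], IsSFlat R S M :=
    fun M _ _ => isSFlat_aux S hS M
  refine ⟨key, ?_⟩
  obtain ⟨a, ha0, hau⟩ := Ring.exists_not_isUnit_of_not_isField hnf
  refine ⟨ModuleCat.of R (ULift (R ⧸ (Ideal.span {a} : Ideal R))),
    isSFlat_aux S hS _, ?_⟩
  intro hflat'
  set Q := R ⧸ Ideal.span {a} with hQ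
  have hflat : Module.Flat R Q :=
    (Module.Flat.equiv_iff (ULift.moduleEquiv : ULift Q ≃ₗ[R] Q)).1 hflat'
  have hfinj : Function.Injective ((a • LinearMap.id : R →ₗ[R] R)) := by
    intro r s h
    simpa using mul_left_cancel₀ ha0 (by simpa [smul_eq_mul] using h)
  have hinj := Module.Flat.lTensor_preserves_injective_linearMap
    (M := Q) (a • LinearMap.id : R →ₗ[R] R) hfinj
  have hsm : a • (Ideal.Quotient.mk (Ideal.span {a}) 1 : Q) = 0 := by
    rw [← Ideal.Quotient.mk_eq_mk, ← Submodule.Quotient.mk_smul]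
    exact (Submodule.Quotient.mk_eq_zero _).2
      (by simpa using Ideal.mem_span_singleton_self a)
  have hten : (LinearMap.lTensor Q (a • LinearMap.id : R →ₗ[R] R))
      ((Ideal.Quotient.mk (Ideal.span {a}) 1 : Q) ⊗ₜ[R] (1 : R)) = 0 := by
    rw [LinearMap.lTensor_smul, LinearMap.lTensor_id]
    show a • ((Ideal.Quotient.mk (Ideal.span {a}) 1 : Q) ⊗ₜ[R] (1 : R)) = 0
    rw [TensorProduct.smul_tmul', hsm, TensorProduct.zero_tmul]
  have h0 : (Ideal.Quotient.mk (Ideal.span {a}) 1 : Q) ⊗ₜ[R] (1 : R) = 0 :=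
    hinj (hten.trans (map_zero _).symm)
  have h1 : (Ideal.Quotient.mk (Ideal.span {a}) 1 : Q) = 0 := by
    calc (Ideal.Quotient.mk (Ideal.span {a}) 1 : Q)
        = TensorProduct.rid R Q ((Ideal.Quotient.mk (Ideal.span {a}) 1 : Q) ⊗ₜ[R] (1 : R)) := by
          rw [TensorProduct.rid_tmul, one_smul]
      _ = TensorProduct.rid R Q 0 := by rw [h0]
      _ = 0 := map_zero _
  have : (1 : R) ∈ Ideal.span {a} := Ideal.Quotient.eq_zero_iff_mem.1 h1
  rw [Ideal.mem_span_singleton] at this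
  exact hau (isUnit_of_dvd_one this)
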